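/- arXiv:1009.2973 — 4 statements merged into one kernel-verified Lean document; each statement's English description precedes it below -/
import Mathlib

section
/- Let K, ρ, α∞ > 0. Define P∞(S) = K e^{ρ α∞} ∫_1^∞ (1/z²) e^{−zρS} dz for S > 0. Then P∞ satisfies the ODE S P∞''(S) + ρ S P∞'(S) − ρ P∞(S) = 0 for all S > 0. -/
open MeasureTheory Real Filter Set Topology

private lemma st5_int_exp (ρ S : ℝ) (hρ : 0 < ρ) (hS : 0 < S) :
    IntegrableOn (fun z : ℝ => Real.exp (-z * ρ * S)) (Set.Ioi 1) := by
  have h := exp_neg_integrableOn_Ioi (1 : ℝ) (mul_pos hρ hS)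
  have he : (fun x : ℝ => Real.exp (-(ρ * S) * x)) = fun z : ℝ => Real.exp (-z * ρ * S) := by
    funext x; congr 1; ring
  rwa [he] at h

private lemma st5_meas (k : ℕ) (f : ℝ → ℝ) (hf : Continuous f) :
    AEStronglyMeasurable (fun z : ℝ => (1 / z ^ k) * f z)
      ((volume : Measure ℝ).restrict (Set.Ioi 1)) := by
  refine ContinuousOn.aestronglyMeasurable ?_ measurableSet_Ioi
  refine ContinuousOn.mul ?_ hf.continuousOn
  exact continuousOn_const.div (continuousOn_pow k)
    fun z hz => pow_ne_zero _ (ne_of_gt (lt_trans one_pos hz))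

private lemma st5_int_pow (ρ S : ℝ) (hρ : 0 < ρ) (hS : 0 < S) (k : ℕ) :
    IntegrableOn (fun z : ℝ => (1 / z ^ k) * Real.exp (-z * ρ * S)) (Set.Ioi 1) := by
  refine (st5_int_exp ρ S hρ hS).mono' (st5_meas k _ (by continuity)) ?_
  filter_upwards [ae_restrict_mem measurableSet_Ioi] with z hz
  have hz1 : (1 : ℝ) < z := hz
  have h0 : (0 : ℝ) < z := lt_trans one_pos hz1
  have hk : (1 : ℝ) ≤ z ^ k := one_le_pow₀ hz1.le
  rw [Real.norm_eq_abs, abs_mul, abs_of_pos (by positivity : (0:ℝ) < 1 / z ^ k),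
    abs_of_pos (Real.exp_pos _)]
  calc (1 / z ^ k) * Real.exp (-z * ρ * S) ≤ 1 * Real.exp (-z * ρ * S) := by
        apply mul_le_mul_of_nonneg_right _ (Real.exp_pos _).le
        rw [div_le_one (by positivity)]; exact hk
    _ = Real.exp (-z * ρ * S) := one_mul _

private lemma st5_hasDeriv (ρ : ℝ) (hρ : 0 < ρ) (k : ℕ) (hk : k ≠ 0) {S : ℝ} (hS : 0 < S) :
    HasDerivAt (fun t => ∫ z in Set.Ioi (1 : ℝ), (1 / z ^ k) * Real.exp (-z * ρ * t))
      (∫ z in Set.Ioi (1 : ℝ), (1 / z ^ k) * (Real.exp (-z * ρ * S) * (-z * ρ))) S := by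
  have hS2 : 0 < S / 2 := by positivity
  have key := hasDerivAt_integral_of_dominated_loc_of_deriv_le
    (F := fun t (z : ℝ) => (1 / z ^ k) * Real.exp (-z * ρ * t))
    (F' := fun t (z : ℝ) => (1 / z ^ k) * (Real.exp (-z * ρ * t) * (-z * ρ)))
    (x₀ := S) (μ := (volume : Measure ℝ).restrict (Set.Ioi 1))
    (bound := fun z => ρ * Real.exp (-z * ρ * (S / 2))) (Metric.ball_mem_nhds S hS2)
    (Filter.Eventually.of_forall fun t => st5_meas k _ (by continuity))
    (st5_int_pow ρ S hρ hS k)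
    (st5_meas k _ (by continuity))
    ?_ ((st5_int_exp ρ (S / 2) hρ hS2).const_mul ρ) ?_
  · exact key.2
  · -- bound
    filter_upwards [ae_restrict_mem measurableSet_Ioi] with z hz t ht
    have hz1 : (1 : ℝ) < z := hz
    have h0 : (0 : ℝ) < z := lt_trans one_pos hz1
    have htS : S / 2 < t := by
      rw [Metric.mem_ball, Real.dist_eq, abs_lt] at ht
      linarith [ht.1]
    have hzk : z ≤ z ^ k := le_self_pow₀ hz1.le hk
    have hneg : (1 / z ^ k) * (Real.exp (-z * ρ * t) * (-z * ρ)) ≤ 0 := by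
      apply mul_nonpos_of_nonneg_of_nonpos (by positivity)
      apply mul_nonpos_of_nonneg_of_nonpos (Real.exp_pos _).le
      nlinarith
    rw [Real.norm_eq_abs, abs_of_nonpos hneg]
    have hee : Real.exp (-z * ρ * t) ≤ Real.exp (-z * ρ * (S / 2)) := by
      apply Real.exp_le_exp.mpr
      nlinarith [mul_lt_mul_of_pos_left htS (mul_pos h0 hρ)]
    have hdiv : z / z ^ k ≤ 1 := (div_le_one (by positivity)).mpr hzk
    calc -((1 / z ^ k) * (Real.exp (-z * ρ * t) * (-z * ρ)))
        = ρ * (z / z ^ k) * Real.exp (-z * ρ * t) := by ring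
      _ ≤ ρ * 1 * Real.exp (-z * ρ * (S / 2)) := by
          apply mul_le_mul _ hee (Real.exp_pos _).le (by positivity)
          exact mul_le_mul_of_nonneg_left hdiv hρ.le
      _ = ρ * Real.exp (-z * ρ * (S / 2)) := by ring
  · -- differentiability
    filter_upwards with z t _
    have h1 : HasDerivAt (fun t : ℝ => -z * ρ * t) (-z * ρ) t := by
      simpa using HasDerivAt.const_mul (-z * ρ) (hasDerivAt_id t)
    exact (h1.exp).const_mul (1 / z ^ k)

private lemma st5_key (ρ : ℝ) (t : ℝ) (k : ℕ) :
    (∫ z in Set.Ioi (1 : ℝ), (1 / z ^ (k + 1)) * (Real.exp (-z * ρ * t) * (-z * ρ)))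
      = -ρ * ∫ z in Set.Ioi (1 : ℝ), (1 / z ^ k) * Real.exp (-z * ρ * t) := by
  rw [← MeasureTheory.integral_const_mul]
  apply setIntegral_congr_fun measurableSet_Ioi
  intro z hz
  have h0 : z ≠ 0 := (lt_trans one_pos hz).ne'
  field_simp
  ring

private lemma st5_I0 (ρ S : ℝ) (hρ : 0 < ρ) (hS : 0 < S) :
    (∫ z in Set.Ioi (1 : ℝ), (1 / z ^ 0) * Real.exp (-z * ρ * S))
      = Real.exp (-(ρ * S)) / (ρ * S) := by
  have hc : 0 < ρ * S := mul_pos hρ hS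
  have h := integral_Ioi_of_hasDerivAt_of_tendsto' (a := (1 : ℝ))
    (f := fun z => -(1 / (ρ * S)) * Real.exp (-z * ρ * S))
    (f' := fun z => (1 / z ^ 0) * Real.exp (-z * ρ * S)) (m := 0) ?_ ?_ ?_
  · rw [h]
    have he : Real.exp (-1 * ρ * S) = Real.exp (-(ρ * S)) := by congr 1; ring
    rw [he]; ring
  · intro x _
    have h1 : HasDerivAt (fun z : ℝ => -z * ρ * S) (-(ρ * S)) x := by
      have : (fun z : ℝ => -z * ρ * S) = fun z : ℝ => -(ρ * S) * z := by funext z; ring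
      rw [this]; simpa using HasDerivAt.const_mul (-(ρ * S)) (hasDerivAt_id x)
    have := (h1.exp).const_mul (-(1 / (ρ * S)))
    convert this using 1 <;> try rfl
    field_simp
  · exact st5_int_pow ρ S hρ hS 0
  · have t2 : Tendsto (fun z : ℝ => Real.exp (-z * ρ * S)) atTop (𝓝 0) := by
      have hm : Tendsto (fun z : ℝ => z * (ρ * S)) atTop atTop :=
        Tendsto.atTop_mul_const hc tendsto_id
      have := Real.tendsto_exp_atBot.comp (tendsto_neg_atTop_atBot.comp hm)
      refine this.congr fun z => ?_
      simp [Function.comp]; ring_nf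
    have := t2.const_mul (-(1 / (ρ * S)))
    simpa using this

private lemma st5_ibp (ρ S : ℝ) (hρ : 0 < ρ) (hS : 0 < S) :
    (∫ z in Set.Ioi (1 : ℝ), (1 / z ^ 2) * Real.exp (-z * ρ * S))
      = Real.exp (-(ρ * S))
        - (ρ * S) * ∫ z in Set.Ioi (1 : ℝ), (1 / z ^ 1) * Real.exp (-z * ρ * S) := by
  have hc : 0 < ρ * S := mul_pos hρ hS
  have h := integral_Ioi_of_hasDerivAt_of_tendsto' (a := (1 : ℝ))
    (f := fun z => -(1 / z) * Real.exp (-z * ρ * S))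
    (f' := fun z => (1 / z ^ 2) * Real.exp (-z * ρ * S)
      + (ρ * S) * ((1 / z ^ 1) * Real.exp (-z * ρ * S))) (m := 0) ?_ ?_ ?_
  · rw [MeasureTheory.integral_add (st5_int_pow ρ S hρ hS 2)
      (((st5_int_pow ρ S hρ hS 1)).const_mul (ρ * S)),
      MeasureTheory.integral_const_mul] at h
    have he : Real.exp (-1 * ρ * S) = Real.exp (-(ρ * S)) := by congr 1; ring
    rw [he] at h
    have h1 : (0 : ℝ) - (-(1 / 1) * Real.exp (-(ρ * S))) = Real.exp (-(ρ * S)) := by norm_num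
    rw [h1] at h
    linarith [h]
  · intro x hx
    have hx0 : x ≠ 0 := (lt_of_lt_of_le one_pos hx).ne'
    have hx0' : (0:ℝ) < x := lt_of_lt_of_le one_pos hx
    have h1 : HasDerivAt (fun z : ℝ => -z * ρ * S) (-(ρ * S)) x := by
      have : (fun z : ℝ => -z * ρ * S) = fun z : ℝ => -(ρ * S) * z := by funext z; ring
      rw [this]; simpa using HasDerivAt.const_mul (-(ρ * S)) (hasDerivAt_id x)
    have hinv : HasDerivAt (fun z : ℝ => -(1 / z)) (-(-(x ^ 2)⁻¹)) x := by
      have := (hasDerivAt_inv hx0).neg; simp only [one_div]; convert this using 1 <;> try rfl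
    have := hinv.mul h1.exp
    convert this using 1 <;> try rfl
    field_simp
  · refine (st5_int_pow ρ S hρ hS 2).add ?_
    exact ((st5_int_pow ρ S hρ hS 1)).const_mul (ρ * S)
  · have t1 : Tendsto (fun z : ℝ => -(1 / z)) atTop (𝓝 0) := by
      simpa [one_div] using tendsto_inv_atTop_zero (𝕜 := ℝ) |>.neg
    have t2 : Tendsto (fun z : ℝ => Real.exp (-z * ρ * S)) atTop (𝓝 0) := by
      have hm : Tendsto (fun z : ℝ => z * (ρ * S)) atTop atTop :=
        Tendsto.atTop_mul_const hc tendsto_id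
      have := Real.tendsto_exp_atBot.comp (tendsto_neg_atTop_atBot.comp hm)
      refine this.congr fun z => ?_
      simp [Function.comp]; ring_nf
    simpa using t1.mul t2

theorem stmt_5 (K ρ A : ℝ) (hK : 0 < K) (hρ : 0 < ρ) (hα : 0 < A)
    (P : ℝ → ℝ)
    (hP : ∀ S : ℝ, P S =
      K * Real.exp (ρ * A) * ∫ z in Set.Ioi (1 : ℝ), (1 / z ^ 2) * Real.exp (-z * ρ * S)) :
    ∀ S : ℝ, 0 < S →
      S * deriv (deriv P) S + ρ * S * deriv P S - ρ * P S = 0 := by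
  intro S hS
  set CK := K * Real.exp (ρ * A) with hCK
  set I1 : ℝ → ℝ := fun t => ∫ z in Set.Ioi (1 : ℝ), (1 / z ^ 1) * Real.exp (-z * ρ * t)
    with hI1
  set I0 : ℝ → ℝ := fun t => ∫ z in Set.Ioi (1 : ℝ), (1 / z ^ 0) * Real.exp (-z * ρ * t)
    with hI0
  -- first derivative of P at any t > 0
  have hPd : ∀ t : ℝ, 0 < t → HasDerivAt P (CK * (-ρ * I1 t)) t := by
    intro t ht
    have h2 := (st5_hasDeriv ρ hρ 2 (by norm_num) ht).const_mul CK
    rw [st5_key ρ t 1] at h2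
    have hfun : (fun u => CK * ∫ z in Set.Ioi (1 : ℝ), (1 / z ^ 2) * Real.exp (-z * ρ * u))
        = P := by funext u; rw [hP u]
    rwa [hfun] at h2
  -- second derivative at S
  have hI1d : HasDerivAt (fun t => CK * (-ρ * I1 t)) (CK * (-ρ * (-ρ * I0 S))) S := by
    have h1 := (st5_hasDeriv ρ hρ 1 (by norm_num) hS)
    rw [st5_key ρ S 0] at h1
    exact (h1.const_mul (-ρ)).const_mul CK
  have hev : deriv P =ᶠ[nhds S] fun t => CK * (-ρ * I1 t) := by
    filter_upwards [(isOpen_Ioi (a := (0:ℝ))).eventually_mem hS] with t ht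
    exact (hPd t ht).deriv
  have hdd : deriv (deriv P) S = CK * (-ρ * (-ρ * I0 S)) := by
    rw [hev.deriv_eq]
    exact hI1d.deriv
  have hd1 : deriv P S = CK * (-ρ * I1 S) := (hPd S hS).deriv
  have hI0v : I0 S = Real.exp (-(ρ * S)) / (ρ * S) := st5_I0 ρ S hρ hS
  have hPS : P S = CK * (Real.exp (-(ρ * S)) - (ρ * S) * I1 S) := by
    rw [hP S, st5_ibp ρ S hρ hS]
  rw [hdd, hd1, hPS, hI0v]
  field_simp
  ring
end

section
/- Let K, ρ > 0 and suppose α∞ > 0 satisfies K ρ ∫_1^∞ (1/z) e^{−ρ α∞ z} dz = e^{−ρ α∞}. Define P∞(S) = K e^{ρ α∞} ∫_1^∞ (1/z²) e^{−zρS} dz. Then P∞(α∞) = K − α∞ and P∞'(α∞) = −1. -/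
open MeasureTheory Real

lemma int_one_div (b : ℝ) (hb : 0 < b) :
    IntegrableOn (fun z : ℝ => (1 / z) * Real.exp (-(b * z))) (Set.Ioi 1) := by
  apply Integrable.mono (g := fun z : ℝ => Real.exp (-b * z)) (exp_neg_integrableOn_Ioi 1 hb)
  · apply ContinuousOn.aestronglyMeasurable _ measurableSet_Ioi
    exact (continuousOn_const.div continuousOn_id
      (fun x hx => ne_of_gt (lt_trans zero_lt_one hx))).mul
      ((Real.continuous_exp.comp (by continuity)).continuousOn)
  · filter_upwards [ae_restrict_mem measurableSet_Ioi] with z hz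
    have hz1 : (1:ℝ) < z := hz
    have hz0 : 0 < z := by linarith
    rw [Real.norm_eq_abs, Real.norm_eq_abs, abs_of_pos (by positivity),
      abs_of_pos (Real.exp_pos _)]
    have h1 : 1 / z ≤ 1 := by rw [div_le_one hz0]; linarith
    calc 1 / z * Real.exp (-(b * z)) ≤ 1 * Real.exp (-(b * z)) :=
          mul_le_mul_of_nonneg_right h1 (Real.exp_pos _).le
      _ = Real.exp (-b * z) := by rw [one_mul, neg_mul]

lemma int_one_div_sq (b : ℝ) (hb : 0 < b) :
    IntegrableOn (fun z : ℝ => (1 / z ^ 2) * Real.exp (-(b * z))) (Set.Ioi 1) := by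
  apply Integrable.mono (g := fun z : ℝ => Real.exp (-b * z)) (exp_neg_integrableOn_Ioi 1 hb)
  · apply ContinuousOn.aestronglyMeasurable _ measurableSet_Ioi
    exact (continuousOn_const.div (continuousOn_id.pow 2)
      (fun x hx => pow_ne_zero 2 (ne_of_gt (lt_trans zero_lt_one hx)))).mul
      ((Real.continuous_exp.comp (by continuity)).continuousOn)
  · filter_upwards [ae_restrict_mem measurableSet_Ioi] with z hz
    have hz1 : (1:ℝ) < z := hz
    have hz0 : 0 < z := by linarith
    rw [Real.norm_eq_abs, Real.norm_eq_abs, abs_of_pos (by positivity),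
      abs_of_pos (Real.exp_pos _)]
    have h1 : 1 / z ^ 2 ≤ 1 := by rw [div_le_one (by positivity)]; nlinarith
    calc 1 / z ^ 2 * Real.exp (-(b * z)) ≤ 1 * Real.exp (-(b * z)) :=
          mul_le_mul_of_nonneg_right h1 (Real.exp_pos _).le
      _ = Real.exp (-b * z) := by rw [one_mul, neg_mul]

lemma exp_tendsto_aux (b : ℝ) (hb : 0 < b) :
    Filter.Tendsto (fun z : ℝ => Real.exp (-(b * z))) Filter.atTop (nhds 0) :=
  Real.tendsto_exp_atBot.comp
    (Filter.tendsto_neg_atTop_atBot.comp (Filter.Tendsto.const_mul_atTop hb Filter.tendsto_id))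

lemma ibp (b : ℝ) (hb : 0 < b) :
    (∫ z in Set.Ioi (1:ℝ), (1 / z ^ 2) * Real.exp (-(b * z)))
      = Real.exp (-b) - b * ∫ z in Set.Ioi (1:ℝ), (1 / z) * Real.exp (-(b * z)) := by
  have hint1 := int_one_div b hb
  have hint2 := int_one_div_sq b hb
  have hint' : IntegrableOn (fun z : ℝ =>
      (1 / z ^ 2) * Real.exp (-(b * z)) + b * ((1 / z) * Real.exp (-(b * z))))
      (Set.Ioi 1) := hint2.add (hint1.const_mul b)
  have hderiv : ∀ z ∈ Set.Ioi (1:ℝ),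
      HasDerivAt (fun z : ℝ => -((1 / z) * Real.exp (-(b * z))))
        ((1 / z ^ 2) * Real.exp (-(b * z)) + b * ((1 / z) * Real.exp (-(b * z)))) z := by
    intro z hz
    have hz1 : (1:ℝ) < z := hz
    have hz0 : z ≠ 0 := ne_of_gt (by linarith)
    have h0 : HasDerivAt (fun z : ℝ => -(b * z)) (-b) z := by
      have := ((hasDerivAt_id z).const_mul b).neg
      simp only [mul_one] at this
      exact this
    have h1 : HasDerivAt (fun z : ℝ => 1 / z) (-(1 / z ^ 2)) z := by
      simpa [one_div] using hasDerivAt_inv hz0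
    have h2 := (h1.mul h0.exp).neg
    exact h2.congr_deriv (by ring)
  have hcont : ContinuousWithinAt (fun z : ℝ => -((1 / z) * Real.exp (-(b * z))))
      (Set.Ici 1) 1 := by
    apply ContinuousAt.continuousWithinAt
    have h1 : ContinuousAt (fun z : ℝ => 1 / z) 1 :=
      continuousAt_const.div continuousAt_id one_ne_zero
    have h2 : ContinuousAt (fun z : ℝ => Real.exp (-(b * z))) 1 :=
      (Real.continuous_exp.comp (by continuity)).continuousAt
    exact (h1.mul h2).neg
  have htends : Filter.Tendsto (fun z : ℝ => -((1 / z) * Real.exp (-(b * z))))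
      Filter.atTop (nhds 0) := by
    have h1 : Filter.Tendsto (fun z : ℝ => 1 / z) Filter.atTop (nhds 0) := by
      simpa [one_div] using tendsto_inv_atTop_zero
    have := (h1.mul (exp_tendsto_aux b hb)).neg
    simpa using this
  have key : (∫ z in Set.Ioi (1:ℝ),
      ((1 / z ^ 2) * Real.exp (-(b * z)) + b * ((1 / z) * Real.exp (-(b * z)))))
      = 0 - -((1 / (1:ℝ)) * Real.exp (-(b * 1))) :=
    integral_Ioi_of_hasDerivAt_of_tendsto hcont hderiv hint' htends
  rw [integral_add hint2 (hint1.const_mul b), integral_const_mul] at key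
  simp only [div_one, one_mul, mul_one, zero_sub, neg_neg] at key
  linarith [key]

theorem stmt_6 (K ρ A : ℝ) (hK : 0 < K) (hρ : 0 < ρ) (hα : 0 < A)
    (heq : K * ρ * (∫ z in Set.Ioi (1 : ℝ), (1 / z) * Real.exp (-ρ * A * z)) =
      Real.exp (-ρ * A))
    (P : ℝ → ℝ)
    (hP : ∀ S : ℝ, P S =
      K * Real.exp (ρ * A) * ∫ z in Set.Ioi (1 : ℝ), (1 / z ^ 2) * Real.exp (-z * ρ * S)) :
    P A = K - A ∧ deriv P A = -1 := by
  have hb : 0 < ρ * A := mul_pos hρ hα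
  have heq' : K * ρ * (∫ z in Set.Ioi (1:ℝ), (1 / z) * Real.exp (-(ρ * A * z)))
      = Real.exp (-(ρ * A)) := by simpa [neg_mul] using heq
  have hEne : Real.exp (ρ * A) ≠ 0 := (Real.exp_pos _).ne'
  have hswap : (fun z : ℝ => (1 / z ^ 2) * Real.exp (-z * ρ * A))
      = fun z : ℝ => (1 / z ^ 2) * Real.exp (-(ρ * A * z)) := by
    funext z; congr 1; congr 1; ring
  have hIval : (∫ z in Set.Ioi (1:ℝ), (1 / z) * Real.exp (-(ρ * A * z)))
      = Real.exp (-(ρ * A)) / (K * ρ) := by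
    rw [eq_div_iff (by positivity)]
    linarith [heq']
  constructor
  · rw [hP A, hswap, ibp (ρ * A) hb, hIval, Real.exp_neg]
    field_simp
  · -- derivative part
    have meas2 : ∀ x : ℝ, AEStronglyMeasurable (fun z : ℝ => (1 / z ^ 2) * Real.exp (-z * ρ * x))
        (volume.restrict (Set.Ioi 1)) := by
      intro x
      apply ContinuousOn.aestronglyMeasurable _ measurableSet_Ioi
      exact (continuousOn_const.div (continuousOn_id.pow 2)
        (fun z hz => pow_ne_zero 2 (ne_of_gt (lt_trans zero_lt_one hz)))).mul
        ((Real.continuous_exp.comp (by continuity)).continuousOn)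
    have meas1 : AEStronglyMeasurable
        (fun z : ℝ => -(ρ * ((1 / z) * Real.exp (-z * ρ * A))))
        (volume.restrict (Set.Ioi 1)) := by
      apply ContinuousOn.aestronglyMeasurable _ measurableSet_Ioi
      exact ((continuousOn_const.mul ((continuousOn_const.div continuousOn_id
        (fun z hz => ne_of_gt (lt_trans zero_lt_one hz))).mul
        ((Real.continuous_exp.comp (by continuity)).continuousOn)))).neg
    have hFint : Integrable (fun z : ℝ => (1 / z ^ 2) * Real.exp (-z * ρ * A))
        (volume.restrict (Set.Ioi 1)) := by
      have := int_one_div_sq (ρ * A) hb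
      simpa [IntegrableOn, show ∀ z : ℝ, -(ρ * A * z) = -z * ρ * A from fun z => by ring]
        using this
    have hbd : 0 < ρ * A / 2 := by positivity
    have hboundint : Integrable (fun z : ℝ => ρ * Real.exp (-(ρ * A / 2) * z))
        (volume.restrict (Set.Ioi 1)) :=
      (exp_neg_integrableOn_Ioi 1 hbd).const_mul ρ
    have key := hasDerivAt_integral_of_dominated_loc_of_deriv_le
      (F := fun x z => (1 / z ^ 2) * Real.exp (-z * ρ * x))
      (F' := fun x z => -(ρ * ((1 / z) * Real.exp (-z * ρ * x))))
      (x₀ := A) (bound := fun z => ρ * Real.exp (-(ρ * A / 2) * z))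
      (μ := volume.restrict (Set.Ioi 1)) (Metric.ball_mem_nhds A (half_pos hα))
      (Filter.Eventually.of_forall meas2) hFint meas1
      ?_ hboundint ?_
    · have hD := key.2
      have hPfun : P = fun S =>
          K * Real.exp (ρ * A) *
            ∫ z in Set.Ioi (1:ℝ), (1 / z ^ 2) * Real.exp (-z * ρ * S) := funext hP
      rw [hPfun]
      rw [(hD.const_mul (K * Real.exp (ρ * A))).deriv]
      have hI' : (∫ z in Set.Ioi (1:ℝ), -(ρ * ((1 / z) * Real.exp (-z * ρ * A))))
          = -(ρ * ∫ z in Set.Ioi (1:ℝ), (1 / z) * Real.exp (-(ρ * A * z))) := by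
        have hfun : (fun z : ℝ => (1 / z) * Real.exp (-z * ρ * A))
            = fun z : ℝ => (1 / z) * Real.exp (-(ρ * A * z)) := by
          funext z; congr 1; congr 1; ring
        rw [integral_neg, integral_const_mul, hfun]
      rw [hI', hIval, Real.exp_neg]
      field_simp
    · -- bound
      filter_upwards [ae_restrict_mem measurableSet_Ioi] with z hz x hx
      have hz1 : (1:ℝ) < z := hz
      have hz0 : 0 < z := by linarith
      have hx2 : A / 2 < x := by
        have := abs_lt.mp (mem_ball_iff_norm.mp hx)
        linarith [this.1]
      have harg : -z * ρ * x ≤ -(ρ * A / 2) * z := by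
        have h1 : ρ * A / 2 * z ≤ ρ * x * z := by
          apply mul_le_mul_of_nonneg_right _ hz0.le
          have : ρ * (A / 2) ≤ ρ * x := mul_le_mul_of_nonneg_left hx2.le hρ.le
          linarith
        nlinarith
      rw [Real.norm_eq_abs, abs_neg, abs_of_pos (by positivity)]
      have h1 : 1 / z ≤ 1 := by rw [div_le_one hz0]; linarith
      calc ρ * (1 / z * Real.exp (-z * ρ * x)) ≤ ρ * (1 * Real.exp (-z * ρ * x)) := by
            apply mul_le_mul_of_nonneg_left _ hρ.le
            exact mul_le_mul_of_nonneg_right h1 (Real.exp_pos _).le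
        _ ≤ ρ * Real.exp (-(ρ * A / 2) * z) := by
            rw [one_mul]
            exact mul_le_mul_of_nonneg_left (Real.exp_le_exp.mpr harg) hρ.le
    · -- differentiability
      filter_upwards [ae_restrict_mem measurableSet_Ioi] with z hz x hx
      have hz1 : (1:ℝ) < z := hz
      have hz0 : z ≠ 0 := ne_of_gt (by linarith)
      have h0 : HasDerivAt (fun x : ℝ => -z * ρ * x) (-z * ρ) x := by
        simpa using (hasDerivAt_id x).const_mul (-z * ρ)
      have h1 := h0.exp.const_mul (1 / z ^ 2)
      refine h1.congr_deriv ?_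
      field_simp
end

section
/- For each K, ρ > 0 there exists a unique x > 0 satisfying K ρ ∫_1^∞ (1/z) e^{−xz} dz = e^{−x} with x = ρ α∞; equivalently, the function h(x) = e^x K ρ ∫_1^∞ (1/z) e^{−xz} dz is strictly decreasing on (0, ∞) with h(0⁺) = +∞ and h(∞) = 0, so h(x) = 1 has a unique positive solution. -/
open MeasureTheory Real Filter Set

private lemma aux_int_exp {x : ℝ} (hx : 0 < x) :
    IntegrableOn (fun z : ℝ => Real.exp (-x * (z - 1))) (Set.Ioi 1) := by
  have h : (fun z : ℝ => Real.exp (-x * (z - 1)))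
      = fun z => Real.exp x * Real.exp (-x * z) := by
    funext z; rw [← Real.exp_add]; ring_nf
  rw [h]
  exact (exp_neg_integrableOn_Ioi 1 hx).const_mul _

private lemma aux_meas (x : ℝ) :
    AEStronglyMeasurable (fun z : ℝ => (1 / z) * Real.exp (-x * (z - 1)))
      (volume.restrict (Set.Ioi 1)) := by
  apply Measurable.aestronglyMeasurable
  fun_prop

private lemma aux_intF {x : ℝ} (hx : 0 < x) :
    IntegrableOn (fun z : ℝ => (1 / z) * Real.exp (-x * (z - 1))) (Set.Ioi 1) := by
  refine (aux_int_exp hx).mono' (aux_meas x) ?_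
  filter_upwards [ae_restrict_mem measurableSet_Ioi] with z hz
  have h1 : (1 : ℝ) < z := hz
  rw [Real.norm_eq_abs, abs_mul, abs_of_pos (by positivity : (0:ℝ) < 1 / z),
    abs_of_pos (Real.exp_pos _)]
  exact mul_le_of_le_one_left (Real.exp_pos _).le ((div_le_one (by linarith)).mpr (by linarith))

private lemma aux_val {x : ℝ} (hx : 0 < x) :
    ∫ z in Set.Ioi (1:ℝ), Real.exp (-x * (z - 1)) = 1 / x := by
  have hderiv : ∀ z ∈ Set.Ici (1:ℝ),
      HasDerivAt (fun z => -(Real.exp (-x * (z - 1)) / x)) (Real.exp (-x * (z - 1))) z := by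
    intro z _
    have h1 : HasDerivAt (fun z : ℝ => -x * (z - 1)) (-x) z := by
      simpa using ((hasDerivAt_id z).sub_const 1).const_mul (-x)
    have h2 := ((h1.exp).div_const x).neg
    have h3 : -(Real.exp (-x * (z - 1)) * -x / x) = Real.exp (-x * (z - 1)) := by
      field_simp
    rw [h3] at h2
    exact h2
  have htend : Tendsto (fun z : ℝ => -(Real.exp (-x * (z - 1)) / x)) atTop (nhds 0) := by
    have h1 : Tendsto (fun z : ℝ => -x * (z - 1)) atTop atBot := by
      have h2 : Tendsto (fun z : ℝ => x * (z - 1)) atTop atTop :=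
        (tendsto_atTop_add_const_right atTop (-1) tendsto_id).const_mul_atTop hx
      have h3 : (fun z : ℝ => -x * (z - 1)) = fun z => -(x * (z - 1)) := by funext z; ring
      rw [h3]
      exact tendsto_neg_atBot_iff.mpr h2
    have h4 := (Real.tendsto_exp_atBot.comp h1).div_const x
    simpa using h4.neg
  have := integral_Ioi_of_hasDerivAt_of_tendsto' hderiv (aux_int_exp hx) htend
  rw [this]
  norm_num

theorem stmt_7 (K ρ : ℝ) (hK : 0 < K) (hρ : 0 < ρ)
    (h : ℝ → ℝ)
    (hh : ∀ x : ℝ, h x =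
      Real.exp x * K * ρ * ∫ z in Set.Ioi (1 : ℝ), (1 / z) * Real.exp (-x * z)) :
    StrictAntiOn h (Set.Ioi 0) ∧
    Filter.Tendsto h (nhdsWithin 0 (Set.Ioi 0)) Filter.atTop ∧
    Filter.Tendsto h Filter.atTop (nhds 0) ∧
    (∃! x : ℝ, 0 < x ∧
      K * ρ * (∫ z in Set.Ioi (1 : ℝ), (1 / z) * Real.exp (-x * z)) = Real.exp (-x)) := by
  have hKρ : 0 < K * ρ := mul_pos hK hρ
  set H : ℝ → ℝ := fun x => ∫ z in Set.Ioi (1:ℝ), (1 / z) * Real.exp (-x * (z - 1)) with hH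
  have hhH : ∀ x, h x = K * ρ * H x := by
    intro x
    rw [hh x]
    simp only [hH]
    have heq : (∫ z in Set.Ioi (1:ℝ), (1 / z) * Real.exp (-x * (z - 1)))
        = ∫ z in Set.Ioi (1:ℝ), Real.exp x * ((1 / z) * Real.exp (-x * z)) := by
      congr 1
      funext z
      rw [show Real.exp x * ((1 / z) * Real.exp (-x * z))
          = (1 / z) * (Real.exp x * Real.exp (-x * z)) by ring, ← Real.exp_add]
      ring_nf
    rw [heq, integral_const_mul]
    ring
  -- strict antitonicity
  have hanti : StrictAntiOn h (Set.Ioi 0) := by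
    intro a ha b hb hab
    rw [hhH a, hhH b]
    have ha0 : 0 < a := ha
    have hb0 : 0 < b := hb
    have hint_a := aux_intF ha0
    have hint_b := aux_intF hb0
    apply mul_lt_mul_of_pos_left _ hKρ
    have hsub : H a - H b = ∫ z in Set.Ioi (1:ℝ),
        ((1 / z) * Real.exp (-a * (z - 1)) - (1 / z) * Real.exp (-b * (z - 1))) :=
      (integral_sub hint_a hint_b).symm
    have hpos : 0 < ∫ z in Set.Ioi (1:ℝ),
        ((1 / z) * Real.exp (-a * (z - 1)) - (1 / z) * Real.exp (-b * (z - 1))) := by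
      rw [setIntegral_pos_iff_support_of_nonneg_ae]
      · have hsupp : Set.Ioi (1:ℝ) ⊆ Function.support
            (fun z => (1 / z) * Real.exp (-a * (z - 1)) - (1 / z) * Real.exp (-b * (z - 1))) := by
          intro z hz
          have h1 : (1:ℝ) < z := hz
          have h2 : Real.exp (-b * (z - 1)) < Real.exp (-a * (z - 1)) :=
            Real.exp_lt_exp.mpr (by nlinarith)
          have hz0 : 0 < 1 / z := by positivity
          simp only [Function.mem_support]
          intro hcontra
          nlinarith
        calc (0:ENNReal) < volume (Set.Ioi (1:ℝ)) := by simp [Real.volume_Ioi]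
          _ ≤ volume (Function.support
              (fun z => (1 / z) * Real.exp (-a * (z - 1)) - (1 / z) * Real.exp (-b * (z - 1)))
              ∩ Set.Ioi 1) := measure_mono (Set.subset_inter hsupp Set.Subset.rfl)
      · filter_upwards [ae_restrict_mem measurableSet_Ioi] with z hz
        have h1 : (1:ℝ) < z := hz
        have h2 : Real.exp (-b * (z - 1)) ≤ Real.exp (-a * (z - 1)) :=
          Real.exp_le_exp.mpr (by nlinarith)
        have hz0 : 0 ≤ 1 / z := by positivity
        simp only [Pi.zero_apply]
        nlinarith
      · exact hint_a.sub hint_b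
    have : 0 < H a - H b := hsub ▸ hpos
    linarith
  -- tendsto at 0+
  have htend0 : Filter.Tendsto h (nhdsWithin 0 (Set.Ioi 0)) Filter.atTop := by
    rw [Filter.tendsto_atTop]
    intro C
    set L : ℝ := max (2 * C / (K * ρ)) 1 with hLdef
    have hL1 : 1 ≤ L := le_max_right _ _
    have hLC : 2 * C / (K * ρ) ≤ L := le_max_left _ _
    have hCL : 2 * C ≤ K * ρ * L := by
      rw [div_le_iff₀ hKρ] at hLC; linarith
    set M : ℝ := Real.exp L with hMdef
    have hM1 : 1 < M := by
      rw [hMdef]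
      calc (1:ℝ) = Real.exp 0 := Real.exp_zero.symm
        _ < Real.exp L := Real.exp_lt_exp.mpr (by linarith)
    have hev : ∀ᶠ x in nhdsWithin 0 (Set.Ioi 0), (1:ℝ)/2 ≤ Real.exp (-x * (M - 1)) := by
      have hc : Filter.Tendsto (fun x : ℝ => Real.exp (-x * (M - 1)))
          (nhdsWithin 0 (Set.Ioi 0)) (nhds 1) := by
        have h1 : ContinuousAt (fun x : ℝ => Real.exp (-x * (M - 1))) 0 := by fun_prop
        have h2 := h1.tendsto
        simp only [neg_zero, zero_mul, Real.exp_zero] at h2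
        exact h2.mono_left nhdsWithin_le_nhds
      exact hc.eventually (eventually_ge_nhds (by norm_num))
    filter_upwards [hev, self_mem_nhdsWithin] with x hx2 hx0
    have hx : 0 < x := hx0
    have hint := aux_intF hx
    have hintIoc : IntegrableOn (fun z : ℝ => (1 / z) * Real.exp (-x * (z - 1)))
        (Set.Ioc 1 M) := hint.mono_set Set.Ioc_subset_Ioi_self
    have hintc : IntegrableOn (fun z : ℝ => Real.exp (-x * (M - 1)) * (1 / z))
        (Set.Ioc 1 M) := by
      apply (ContinuousOn.integrableOn_Icc ?_).mono_set Set.Ioc_subset_Icc_self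
      apply continuousOn_const.mul
      apply continuousOn_const.div continuousOn_id
      intro z hz
      have h1 : (1:ℝ) ≤ z := hz.1
      simp only [id_eq]
      exact (by linarith : (0:ℝ) < z).ne'
    have hlog : ∫ z in Set.Ioc (1:ℝ) M, 1 / z = L := by
      rw [← intervalIntegral.integral_of_le hM1.le,
        integral_one_div (by
          intro hmem
          have h0 : (0:ℝ) ∈ Set.Icc (1:ℝ) M := by
            rwa [Set.uIcc_of_le hM1.le] at hmem
          linarith [h0.1])]
      rw [div_one, hMdef, Real.log_exp]
    have step1 : ∫ z in Set.Ioc (1:ℝ) M, (1 / z) * Real.exp (-x * (z - 1)) ≤ H x := by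
      apply setIntegral_mono_set hint ?_ (HasSubset.Subset.eventuallyLE Set.Ioc_subset_Ioi_self)
      filter_upwards [ae_restrict_mem measurableSet_Ioi] with z hz
      have h1 : (1:ℝ) < z := hz
      have : (0:ℝ) < z := by linarith
      positivity
    have step2 : Real.exp (-x * (M - 1)) * L
        ≤ ∫ z in Set.Ioc (1:ℝ) M, (1 / z) * Real.exp (-x * (z - 1)) := by
      have hmono : ∫ z in Set.Ioc (1:ℝ) M, Real.exp (-x * (M - 1)) * (1 / z)
          ≤ ∫ z in Set.Ioc (1:ℝ) M, (1 / z) * Real.exp (-x * (z - 1)) := by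
        apply setIntegral_mono_on hintc hintIoc measurableSet_Ioc
        intro z hz
        have h1 : (1:ℝ) < z := hz.1
        have h2 : z ≤ M := hz.2
        have h3 : Real.exp (-x * (M - 1)) ≤ Real.exp (-x * (z - 1)) :=
          Real.exp_le_exp.mpr (by nlinarith)
        have hz0 : 0 ≤ 1 / z := by positivity
        calc Real.exp (-x * (M - 1)) * (1 / z) = (1 / z) * Real.exp (-x * (M - 1)) := by ring
          _ ≤ (1 / z) * Real.exp (-x * (z - 1)) := mul_le_mul_of_nonneg_left h3 hz0
      calc Real.exp (-x * (M - 1)) * L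
          = Real.exp (-x * (M - 1)) * ∫ z in Set.Ioc (1:ℝ) M, 1 / z := by rw [hlog]
        _ = ∫ z in Set.Ioc (1:ℝ) M, Real.exp (-x * (M - 1)) * (1 / z) := by
            rw [integral_const_mul]
        _ ≤ _ := hmono
    have hfinal : C ≤ K * ρ * H x := by
      have hchain : Real.exp (-x * (M - 1)) * L ≤ H x := le_trans step2 step1
      have hL0 : (0:ℝ) ≤ L := by linarith
      have he0 : (0:ℝ) ≤ Real.exp (-x * (M - 1)) - 1/2 := by linarith
      have : (1:ℝ)/2 * L ≤ Real.exp (-x * (M - 1)) * L := by nlinarith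
      nlinarith [mul_le_mul_of_nonneg_left (le_trans this hchain) hKρ.le]
    rw [hhH x]
    exact hfinal
  -- tendsto at atTop
  have htendtop : Filter.Tendsto h Filter.atTop (nhds 0) := by
    have hupper : ∀ x : ℝ, 0 < x → h x ≤ K * ρ * (1 / x) := by
      intro x hx
      rw [hhH x]
      apply mul_le_mul_of_nonneg_left _ hKρ.le
      rw [← aux_val hx]
      apply setIntegral_mono_on (aux_intF hx) (aux_int_exp hx) measurableSet_Ioi
      intro z hz
      have h1 : (1:ℝ) < z := hz
      exact mul_le_of_le_one_left (Real.exp_pos _).le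
        ((div_le_one (by linarith)).mpr (by linarith))
    have hlower : ∀ x : ℝ, 0 < x → 0 ≤ h x := by
      intro x hx
      rw [hhH x]
      apply mul_nonneg hKρ.le
      apply setIntegral_nonneg measurableSet_Ioi
      intro z hz
      have h1 : (1:ℝ) < z := hz
      have : (0:ℝ) < z := by linarith
      positivity
    have hub : Filter.Tendsto (fun x : ℝ => K * ρ * (1 / x)) Filter.atTop (nhds 0) := by
      have := tendsto_inv_atTop_zero.const_mul (K * ρ)
      simpa [one_div] using this
    apply tendsto_of_tendsto_of_tendsto_of_le_of_le' tendsto_const_nhds hub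
    · filter_upwards [Filter.eventually_gt_atTop 0] with x hx using hlower x hx
    · filter_upwards [Filter.eventually_gt_atTop 0] with x hx using hupper x hx
  -- continuity on Ioi 0
  have hcont : ∀ x₀ : ℝ, 0 < x₀ → ContinuousAt h x₀ := by
    intro x₀ hx₀
    have hHcont : ContinuousAt H x₀ := by
      rw [hH]
      apply continuousAt_of_dominated (bound := fun z => Real.exp (-(x₀/2) * (z - 1)))
      · exact Filter.Eventually.of_forall fun x => aux_meas x
      · filter_upwards [isOpen_Ioi.mem_nhds (show x₀/2 < x₀ by linarith)] with x hx
        filter_upwards [ae_restrict_mem measurableSet_Ioi] with z hz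
        have h1 : (1:ℝ) < z := hz
        have hxx : x₀/2 < x := hx
        rw [Real.norm_eq_abs, abs_mul, abs_of_pos (by positivity : (0:ℝ) < 1 / z),
          abs_of_pos (Real.exp_pos _)]
        calc (1 / z) * Real.exp (-x * (z - 1)) ≤ 1 * Real.exp (-x * (z - 1)) := by
              apply mul_le_mul_of_nonneg_right _ (Real.exp_pos _).le
              exact (div_le_one (by linarith)).mpr (by linarith)
          _ ≤ Real.exp (-(x₀/2) * (z - 1)) := by
              rw [one_mul]; exact Real.exp_le_exp.mpr (by nlinarith)
      · exact aux_int_exp (by linarith : (0:ℝ) < x₀/2)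
      · exact Filter.Eventually.of_forall fun z =>
          Continuous.continuousAt (by fun_prop)
    have heq : h = fun x => K * ρ * H x := funext hhH
    rw [heq]
    exact continuousAt_const.mul hHcont
  refine ⟨hanti, htend0, htendtop, ?_⟩
  -- equivalence of the equation with h x = 1
  have hiff : ∀ x : ℝ,
      (K * ρ * (∫ z in Set.Ioi (1:ℝ), (1 / z) * Real.exp (-x * z)) = Real.exp (-x))
      ↔ h x = 1 := by
    intro x
    rw [hh x]
    have key : Real.exp x * Real.exp (-x) = 1 := by rw [← Real.exp_add]; simp
    constructor
    · intro he
      rw [show Real.exp x * K * ρ * (∫ z in Set.Ioi (1:ℝ), (1 / z) * Real.exp (-x * z))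
          = Real.exp x * (K * ρ * ∫ z in Set.Ioi (1:ℝ), (1 / z) * Real.exp (-x * z)) by ring,
        he, key]
    · intro he
      have key' : Real.exp (-x) * Real.exp x = 1 := by rw [mul_comm]; exact key
      calc K * ρ * (∫ z in Set.Ioi (1:ℝ), (1 / z) * Real.exp (-x * z))
          = Real.exp (-x) * (Real.exp x * K * ρ *
            ∫ z in Set.Ioi (1:ℝ), (1 / z) * Real.exp (-x * z)) := by
            rw [show Real.exp (-x) * (Real.exp x * K * ρ *
              ∫ z in Set.Ioi (1:ℝ), (1 / z) * Real.exp (-x * z))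
              = (Real.exp (-x) * Real.exp x) * (K * ρ *
                ∫ z in Set.Ioi (1:ℝ), (1 / z) * Real.exp (-x * z)) by ring, key', one_mul]
        _ = Real.exp (-x) := by rw [he, mul_one]
  -- existence
  obtain ⟨a, ha0, ha2⟩ : ∃ a : ℝ, 0 < a ∧ 2 ≤ h a := by
    have hev := (htend0.eventually_ge_atTop 2).and self_mem_nhdsWithin
    rcases hev.exists with ⟨a, h2, ha⟩
    exact ⟨a, ha, h2⟩
  obtain ⟨b, hab, hb1⟩ : ∃ b : ℝ, a < b ∧ h b < 1 := by
    have h1 : ∀ᶠ x in Filter.atTop, h x < 1 :=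
      htendtop.eventually (eventually_lt_nhds (by norm_num))
    rcases (h1.and (Filter.eventually_gt_atTop a)).exists with ⟨b, hb1, hab⟩
    exact ⟨b, hab, hb1⟩
  have hcontOn : ContinuousOn h (Set.Icc a b) := fun x hx =>
    (hcont x (lt_of_lt_of_le ha0 hx.1)).continuousWithinAt
  have h1mem : (1:ℝ) ∈ Set.Icc (h b) (h a) := ⟨hb1.le, by linarith⟩
  obtain ⟨x, hxmem, hx1⟩ := intermediate_value_Icc' hab.le hcontOn h1mem
  have hx0 : 0 < x := lt_of_lt_of_le ha0 hxmem.1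
  refine ⟨x, ⟨hx0, (hiff x).mpr hx1⟩, ?_⟩
  rintro y ⟨hy0, hy⟩
  exact hanti.injOn (Set.mem_Ioi.mpr hy0) (Set.mem_Ioi.mpr hx0)
    (((hiff y).mp hy).trans hx1.symm)
end

section
/- As ρ → 0⁺, the solution x(ρ) of K ρ ∫_1^∞ (1/z) e^{−xz} dz = e^{−x} satisfies x(ρ) = e^{−γ} e^{−1/(ρK)} (1 + O(ρ)); in particular x(ρ) · e^{γ} e^{1/(ρK)} → 1 as ρ → 0⁺. -/
open MeasureTheory Real Set Filter Topology

noncomputable def E1fun (x : ℝ) : ℝ := ∫ t in Set.Ioi x, Real.exp (-t) / t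



lemma cont_exp_div : ContinuousOn (fun t : ℝ => Real.exp (-t) / t) {0}ᶜ := by
  refine ContinuousOn.div (Continuous.continuousOn (by continuity)) continuousOn_id ?_
  intro t ht; simpa using ht

lemma int_exp_div {x : ℝ} (hx : 0 < x) :
    IntegrableOn (fun t : ℝ => Real.exp (-t) / t) (Set.Ioi x) := by
  have hg : IntegrableOn (fun t : ℝ => x⁻¹ * Real.exp (-(1 : ℝ) * t)) (Set.Ioi x) :=
    (exp_neg_integrableOn_Ioi x one_pos).const_mul _
  refine hg.mono' ?_ ?_
  · refine (cont_exp_div.mono ?_).aestronglyMeasurable measurableSet_Ioi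
    intro t ht; simp only [mem_compl_iff, mem_singleton_iff]; exact (hx.trans ht).ne'
  · filter_upwards [ae_restrict_mem measurableSet_Ioi] with t ht
    have ht0 : 0 < t := hx.trans ht
    rw [Real.norm_eq_abs, abs_of_nonneg (by positivity)]
    have h1 : Real.exp (-t) / t ≤ Real.exp (-t) / x := by gcongr; exact le_of_lt ht
    simpa [div_eq_inv_mul, neg_one_mul] using h1

lemma int_exp_log : IntegrableOn (fun t : ℝ => Real.exp (-t) * Real.log t) (Set.Ioi 0) := by
  have hmeas : AEStronglyMeasurable (fun t : ℝ => Real.exp (-t) * Real.log t)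
      (volume.restrict (Set.Ioi (0:ℝ))) := by
    refine ContinuousOn.aestronglyMeasurable ?_ measurableSet_Ioi
    refine ContinuousOn.mul (Continuous.continuousOn (by continuity)) ?_
    exact Real.continuousOn_log.mono (fun t ht => by simpa using (ne_of_gt ht))
  rw [← Set.Ioc_union_Ioi_eq_Ioi (zero_le_one : (0:ℝ) ≤ 1)]
  refine IntegrableOn.union ?_ ?_
  · -- on Ioc 0 1, bound by 2 * t ^ (-(1/2))
    have hg : IntegrableOn (fun t : ℝ => 2 * t ^ (-(1/2) : ℝ)) (Set.Ioc (0:ℝ) 1) := by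
      refine Integrable.const_mul ?_ _
      have := intervalIntegral.intervalIntegrable_rpow' (a := 0) (b := 1)
        (r := -(1/2)) (by norm_num)
      rwa [intervalIntegrable_iff_integrableOn_Ioc_of_le zero_le_one] at this
    refine hg.mono' (hmeas.mono_measure (Measure.restrict_mono Set.Ioc_subset_Ioi_self le_rfl)) ?_
    filter_upwards [ae_restrict_mem measurableSet_Ioc] with t ht
    have ht0 : 0 < t := ht.1
    have hlog : Real.log t ≤ 0 := Real.log_nonpos ht0.le ht.2
    rw [Real.norm_eq_abs, abs_mul, abs_of_nonneg (Real.exp_nonneg _), abs_of_nonpos hlog]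
    have h1 : Real.exp (-t) ≤ 1 := Real.exp_le_one_iff.mpr (by linarith)
    have h2 : -Real.log t ≤ 2 * t ^ (-(1/2) : ℝ) := by
      have : -Real.log t = 2 * Real.log (t ^ (-(1/2) : ℝ)) := by
        rw [Real.log_rpow ht0]; ring
      rw [this]
      have hp : 0 < t ^ (-(1/2) : ℝ) := Real.rpow_pos_of_pos ht0 _
      nlinarith [Real.log_le_sub_one_of_pos hp]
    calc Real.exp (-t) * -Real.log t ≤ 1 * -Real.log t := by
          apply mul_le_mul_of_nonneg_right h1 (by linarith)
      _ = -Real.log t := one_mul _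
      _ ≤ 2 * t ^ (-(1/2) : ℝ) := h2
  · -- on Ioi 1, bound by exp(-t) * t
    have hg : IntegrableOn (fun t : ℝ => Real.exp (-t) * t ^ ((2:ℝ) - 1)) (Set.Ioi (1:ℝ)) :=
      (Real.GammaIntegral_convergent (by norm_num : (0:ℝ) < 2)).mono_set
        (Set.Ioi_subset_Ioi zero_le_one)
    refine hg.mono' (hmeas.mono_measure
      (Measure.restrict_mono (Set.Ioi_subset_Ioi zero_le_one) le_rfl)) ?_
    filter_upwards [ae_restrict_mem measurableSet_Ioi] with t ht
    have ht1 : (1:ℝ) < t := ht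
    have ht0 : 0 < t := zero_lt_one.trans ht1
    have hlog : 0 ≤ Real.log t := Real.log_nonneg ht1.le
    rw [Real.norm_eq_abs, abs_mul, abs_of_nonneg (Real.exp_nonneg _), abs_of_nonneg hlog]
    have h2 : Real.log t ≤ t := (Real.log_le_sub_one_of_pos ht0).trans (by linarith)
    have : t ^ ((2:ℝ) - 1) = t := by norm_num
    rw [this]
    exact mul_le_mul_of_nonneg_left h2 (Real.exp_nonneg _)


lemma F_tendsto : Tendsto (fun t : ℝ => Real.exp (-t) * Real.log t) atTop (𝓝 0) := by
  refine squeeze_zero_norm' ?_ (Real.tendsto_pow_mul_exp_neg_atTop_nhds_zero 1)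
  filter_upwards [eventually_ge_atTop (1:ℝ)] with t ht
  have ht0 : 0 < t := lt_of_lt_of_le zero_lt_one ht
  rw [Real.norm_eq_abs, abs_mul, abs_of_nonneg (Real.exp_nonneg _),
    abs_of_nonneg (Real.log_nonneg ht), pow_one]
  have h2 : Real.log t ≤ t := (Real.log_le_sub_one_of_pos ht0).trans (by linarith)
  rw [mul_comm t]
  exact mul_le_mul_of_nonneg_left h2 (Real.exp_nonneg _)

lemma hasDeriv_F {t : ℝ} (ht : 0 < t) :
    HasDerivAt (fun t : ℝ => Real.exp (-t) * Real.log t)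
      (Real.exp (-t) / t - Real.exp (-t) * Real.log t) t := by
  have h1 : HasDerivAt (fun t : ℝ => Real.exp (-t)) (-Real.exp (-t)) t := by
    simpa using (hasDerivAt_neg t).exp
  have h2 : HasDerivAt Real.log t⁻¹ t := Real.hasDerivAt_log ht.ne'
  have := h1.mul h2
  convert this using 1
  all_goals first | rfl | ring

lemma key_eq {x : ℝ} (hx : 0 < x) :
    E1fun x = -(Real.exp (-x) * Real.log x) +
      ∫ t in Set.Ioi x, Real.exp (-t) * Real.log t := by
  have hJ : IntegrableOn (fun t : ℝ => Real.exp (-t) * Real.log t) (Set.Ioi x) :=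
    int_exp_log.mono_set (Set.Ioi_subset_Ioi hx.le)
  have hint : IntegrableOn
      (fun t : ℝ => Real.exp (-t) / t - Real.exp (-t) * Real.log t) (Set.Ioi x) :=
    (int_exp_div hx).sub hJ
  have hFTC := integral_Ioi_of_hasDerivAt_of_tendsto
    (f := fun t : ℝ => Real.exp (-t) * Real.log t)
    (f' := fun t : ℝ => Real.exp (-t) / t - Real.exp (-t) * Real.log t)
    (a := x) (m := 0)
    (((hasDeriv_F hx).continuousAt).continuousWithinAt)
    (fun t ht => hasDeriv_F (hx.trans ht)) hint F_tendsto
  rw [integral_sub (int_exp_div hx) hJ] at hFTC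
  have : E1fun x - ∫ t in Set.Ioi x, Real.exp (-t) * Real.log t
      = 0 - Real.exp (-x) * Real.log x := hFTC
  linarith [this]

lemma gamma_eq :
    ∫ t in Set.Ioi (0:ℝ), Real.exp (-t) * Real.log t = -Real.eulerMascheroniConstant := by
  have h1 := Complex.hasDerivAt_GammaIntegral (s := 1) (by simp)
  have heq : Complex.GammaIntegral =ᶠ[nhds (1 : ℂ)] Complex.Gamma := by
    have hopen : IsOpen {s : ℂ | 0 < s.re} := isOpen_lt continuous_const Complex.continuous_re
    filter_upwards [hopen.mem_nhds (by simp : (1:ℂ) ∈ {s : ℂ | 0 < s.re})] with s hs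
    exact (Complex.Gamma_eq_integral hs).symm
  have h2 : HasDerivAt Complex.GammaIntegral (-(Real.eulerMascheroniConstant : ℂ)) 1 := by
    refine Complex.hasDerivAt_Gamma_one.congr_of_eventuallyEq heq
  have h3 := h1.unique h2
  have h4 : (∫ t in Set.Ioi (0:ℝ), ((Real.log t * Real.exp (-t) : ℝ) : ℂ))
      = -(Real.eulerMascheroniConstant : ℂ) := by
    rw [← h3]
    refine setIntegral_congr_fun measurableSet_Ioi (fun t ht => ?_)
    have : (t : ℂ) ^ ((1:ℂ) - 1) = 1 := by
      rw [sub_self, Complex.cpow_zero]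
    rw [this, one_mul]
    push_cast
    ring
  have h5 : (∫ t in Set.Ioi (0:ℝ), Real.log t * Real.exp (-t))
      = -Real.eulerMascheroniConstant := by
    have h7 : (∫ t in Set.Ioi (0:ℝ), ((Real.log t * Real.exp (-t) : ℝ) : ℂ))
        = ((∫ t in Set.Ioi (0:ℝ), Real.log t * Real.exp (-t) : ℝ) : ℂ) := integral_ofReal
    rw [h7] at h4
    exact_mod_cast h4
  rw [← h5]
  refine setIntegral_congr_fun measurableSet_Ioi (fun t ht => mul_comm _ _)


lemma J_tendsto : Tendsto (fun x : ℝ => ∫ t in Set.Ioi x, Real.exp (-t) * Real.log t)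
    (𝓝[>] 0) (𝓝 (∫ t in Set.Ioi (0:ℝ), Real.exp (-t) * Real.log t)) := by
  set f : ℝ → ℝ := fun t => Real.exp (-t) * Real.log t with hf
  have key : Tendsto (fun x : ℝ => ∫ t in Set.Ioi (0:ℝ), (Set.Ioi x).indicator f t)
      (𝓝[>] 0) (𝓝 (∫ t in Set.Ioi (0:ℝ), f t)) := by
    refine tendsto_integral_filter_of_dominated_convergence (fun t => ‖f t‖) ?_ ?_
      int_exp_log.norm ?_
    · filter_upwards [self_mem_nhdsWithin] with x hx
      exact int_exp_log.aestronglyMeasurable.indicator measurableSet_Ioi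
    · filter_upwards [self_mem_nhdsWithin] with x hx
      filter_upwards [] with t
      exact norm_indicator_le_norm_self f t
    · filter_upwards [ae_restrict_mem measurableSet_Ioi] with t ht
      have h1 : Set.Ioo (0:ℝ) t ∈ 𝓝[>] (0:ℝ) :=
        Ioo_mem_nhdsGT_of_mem ⟨le_refl 0, ht⟩
      refine tendsto_const_nhds.congr' ?_
      filter_upwards [h1] with x hx
      exact (Set.indicator_of_mem (Set.mem_Ioi.mpr hx.2) f).symm
  refine key.congr' ?_
  filter_upwards [self_mem_nhdsWithin] with x hx
  rw [setIntegral_indicator measurableSet_Ioi,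
    Set.Ioi_inter_Ioi, max_eq_right (le_of_lt hx)]

lemma mul_log_tendsto : Tendsto (fun x : ℝ => |x * Real.log x|) (𝓝[>] 0) (𝓝 0) := by
  have h := Real.continuous_mul_log.tendsto 0
  have h2 : Tendsto (fun x : ℝ => x * Real.log x) (𝓝[>] 0) (𝓝 0) := by
    simpa using h.mono_left nhdsWithin_le_nhds
  simpa using h2.abs

lemma term1_tendsto :
    Tendsto (fun x : ℝ => (1 - Real.exp (-x)) * Real.log x) (𝓝[>] 0) (𝓝 0) := by
  refine squeeze_zero_norm' ?_ mul_log_tendsto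
  filter_upwards [self_mem_nhdsWithin] with x hx
  have hx0 : (0:ℝ) < x := hx
  have h1 : 0 ≤ 1 - Real.exp (-x) := by
    have := Real.exp_le_one_iff.mpr (by linarith : -x ≤ 0); linarith
  have h2 : 1 - Real.exp (-x) ≤ x := by
    have := Real.add_one_le_exp (-x); linarith
  rw [Real.norm_eq_abs, abs_mul, abs_mul, abs_of_nonneg h1, abs_of_nonneg hx0.le]
  exact mul_le_mul_of_nonneg_right h2 (abs_nonneg _)

lemma r_tendsto : Tendsto (fun x : ℝ => E1fun x + Real.log x + Real.eulerMascheroniConstant)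
    (𝓝[>] 0) (𝓝 0) := by
  have h1 : Tendsto (fun x : ℝ => (1 - Real.exp (-x)) * Real.log x +
      ((∫ t in Set.Ioi x, Real.exp (-t) * Real.log t) + Real.eulerMascheroniConstant))
      (𝓝[>] 0) (𝓝 0) := by
    have h2 := J_tendsto
    rw [gamma_eq] at h2
    have h3 := h2.add_const Real.eulerMascheroniConstant
    rw [neg_add_cancel] at h3
    simpa using term1_tendsto.add h3
  refine h1.congr' ?_
  filter_upwards [self_mem_nhdsWithin] with x hx
  rw [key_eq hx]
  ring

lemma subst_eq {x : ℝ} (hx : 0 < x) :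
    (∫ z in Set.Ioi (1:ℝ), (1 / z) * Real.exp (-x * z)) = E1fun x := by
  have h := integral_comp_mul_left_Ioi (fun t : ℝ => Real.exp (-t) / t) 1 hx
  have h2 : (∫ z in Set.Ioi (1:ℝ), Real.exp (-(x * z)) / (x * z))
      = x⁻¹ * ∫ t in Set.Ioi x, Real.exp (-t) / t := by
    simpa [mul_one, smul_eq_mul] using h
  have h3 : (∫ z in Set.Ioi (1:ℝ), (1 / z) * Real.exp (-x * z))
      = ∫ z in Set.Ioi (1:ℝ), x * (Real.exp (-(x * z)) / (x * z)) := by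
    refine setIntegral_congr_fun measurableSet_Ioi (fun z hz => ?_)
    have hz0 : (0:ℝ) < z := lt_trans zero_lt_one hz
    field_simp
  rw [h3, MeasureTheory.integral_const_mul, h2, E1fun]
  field_simp


lemma E1_le {y : ℝ} (hy : 0 < y) : E1fun y ≤ y⁻¹ * Real.exp (-y) := by
  have hg : IntegrableOn (fun t : ℝ => y⁻¹ * Real.exp (-t)) (Set.Ioi y) := by
    simpa [neg_one_mul, IntegrableOn] using (exp_neg_integrableOn_Ioi y one_pos).const_mul y⁻¹
  have h1 : E1fun y ≤ ∫ t in Set.Ioi y, y⁻¹ * Real.exp (-t) := by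
    refine setIntegral_mono_on (int_exp_div hy) hg measurableSet_Ioi (fun t ht => ?_)
    have ht0 : 0 < t := hy.trans ht
    rw [div_eq_inv_mul]
    exact mul_le_mul_of_nonneg_right (by gcongr; exact le_of_lt ht) (Real.exp_nonneg _)
  rwa [MeasureTheory.integral_const_mul, integral_exp_neg_Ioi] at h1

theorem stmt_8 (K : ℝ) (hK : 0 < K) (x : ℝ → ℝ)
    (hx : ∀ ρ : ℝ, 0 < ρ → 0 < x ρ ∧
      K * ρ * (∫ z in Set.Ioi (1 : ℝ), (1 / z) * Real.exp (-(x ρ) * z)) =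
        Real.exp (-(x ρ))) :
    Filter.Tendsto
      (fun ρ : ℝ => x ρ * Real.exp Real.eulerMascheroniConstant * Real.exp (1 / (ρ * K)))
      (nhdsWithin 0 (Set.Ioi 0)) (nhds 1) := by
  set γ := Real.eulerMascheroniConstant with hγ
  -- the equation in terms of E1fun
  have heq : ∀ ρ : ℝ, 0 < ρ → K * ρ * E1fun (x ρ) = Real.exp (-(x ρ)) := by
    intro ρ hρ
    rw [← subst_eq (hx ρ hρ).1]
    exact (hx ρ hρ).2
  -- x ρ ≤ K * ρ
  have hxle : ∀ ρ : ℝ, 0 < ρ → x ρ ≤ K * ρ := by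
    intro ρ hρ
    obtain ⟨hy, -⟩ := hx ρ hρ
    have h1 : Real.exp (-(x ρ)) ≤ K * ρ * ((x ρ)⁻¹ * Real.exp (-(x ρ))) :=
      calc Real.exp (-(x ρ)) = K * ρ * E1fun (x ρ) := (heq ρ hρ).symm
        _ ≤ K * ρ * ((x ρ)⁻¹ * Real.exp (-(x ρ))) :=
          mul_le_mul_of_nonneg_left (E1_le hy) (by positivity)
    have h2 := mul_le_mul_of_nonneg_right h1 hy.le
    have h3 : K * ρ * ((x ρ)⁻¹ * Real.exp (-(x ρ))) * x ρ
        = Real.exp (-(x ρ)) * (K * ρ) := by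
      field_simp
    rw [h3] at h2
    have := Real.exp_pos (-(x ρ))
    nlinarith
  -- x ρ → 0 within Ioi 0
  have hx0 : Tendsto x (𝓝[>] (0:ℝ)) (𝓝[>] (0:ℝ)) := by
    refine tendsto_nhdsWithin_of_tendsto_nhds_of_eventually_within _ ?_ ?_
    · refine squeeze_zero' (g := fun ρ => K * ρ) ?_ ?_ ?_
      · filter_upwards [self_mem_nhdsWithin] with ρ hρ; exact ((hx ρ hρ).1).le
      · filter_upwards [self_mem_nhdsWithin] with ρ hρ; exact hxle ρ hρ
      · have : Tendsto (fun ρ : ℝ => K * ρ) (𝓝 (0:ℝ)) (𝓝 (K * 0)) :=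
          (continuous_const.mul continuous_id).tendsto 0
        simpa using this.mono_left nhdsWithin_le_nhds
    · filter_upwards [self_mem_nhdsWithin] with ρ hρ; exact (hx ρ hρ).1
  -- the function h and its limit
  set h : ℝ → ℝ := fun y => (1 - Real.exp y) * (Real.log y + γ) +
    Real.exp y * (E1fun y + Real.log y + γ) with hh
  have hth : Tendsto h (𝓝[>] (0:ℝ)) (𝓝 0) := by
    have texp : Tendsto (fun y : ℝ => Real.exp y) (𝓝[>] (0:ℝ)) (𝓝 1) := by
      simpa using (Real.continuous_exp.tendsto 0).mono_left nhdsWithin_le_nhds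
    have t2 : Tendsto (fun y : ℝ => Real.exp y * (E1fun y + Real.log y + γ))
        (𝓝[>] (0:ℝ)) (𝓝 0) := by
      simpa using texp.mul r_tendsto
    have t1 : Tendsto (fun y : ℝ => (1 - Real.exp y) * (Real.log y + γ))
        (𝓝[>] (0:ℝ)) (𝓝 0) := by
      have tg : Tendsto (fun y : ℝ => Real.exp y * (|y * Real.log y| + y * |γ|))
          (𝓝[>] (0:ℝ)) (𝓝 0) := by
        have tb : Tendsto (fun y : ℝ => y * |γ|) (𝓝[>] (0:ℝ)) (𝓝 0) := by
          have : Tendsto (fun y : ℝ => y * |γ|) (𝓝 (0:ℝ)) (𝓝 (0 * |γ|)) :=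
            (continuous_id.mul continuous_const).tendsto 0
          simpa using this.mono_left nhdsWithin_le_nhds
        simpa using texp.mul (mul_log_tendsto.add tb)
      refine squeeze_zero_norm' ?_ tg
      filter_upwards [self_mem_nhdsWithin] with y hy
      have hy0 : (0:ℝ) < y := hy
      have he1 : 1 ≤ Real.exp y := Real.one_le_exp hy0.le
      have he2 : Real.exp y - 1 ≤ y * Real.exp y := by
        have hprod : Real.exp (-y) * Real.exp y = 1 := by
          rw [← Real.exp_add]; simp
        nlinarith [Real.add_one_le_exp (-y), Real.exp_pos y]
      rw [Real.norm_eq_abs, abs_mul]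
      have hb1 : |1 - Real.exp y| = Real.exp y - 1 := by
        rw [abs_sub_comm]; exact abs_of_nonneg (by linarith)
      have hb2 : |Real.log y + γ| ≤ |Real.log y| + |γ| := abs_add_le _ _
      calc |1 - Real.exp y| * |Real.log y + γ|
          ≤ (y * Real.exp y) * (|Real.log y| + |γ|) := by
            rw [hb1]
            exact mul_le_mul he2 hb2 (abs_nonneg _) (by positivity)
        _ = Real.exp y * (|y * Real.log y| + y * |γ|) := by
            rw [abs_mul, abs_of_nonneg hy0.le]
            ring
    simpa using t1.add t2
  -- the log identity
  have hL : Tendsto (fun ρ : ℝ => Real.log (x ρ) + γ + 1 / (ρ * K))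
      (𝓝[>] (0:ℝ)) (𝓝 0) := by
    refine (hth.comp hx0).congr' ?_
    filter_upwards [self_mem_nhdsWithin] with ρ hρ
    have hρ0 : (0:ℝ) < ρ := hρ
    obtain ⟨hy, -⟩ := hx ρ hρ0
    have hKρ : K * ρ ≠ 0 := by positivity
    have hE1 : Real.exp (x ρ) * E1fun (x ρ) = 1 / (ρ * K) := by
      have h1 := heq ρ hρ0
      have h2 : E1fun (x ρ) = Real.exp (-(x ρ)) / (K * ρ) := by
        field_simp at h1 ⊢
        linarith [h1]
      have hprod : Real.exp (x ρ) * Real.exp (-(x ρ)) = 1 := by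
        rw [← Real.exp_add]; simp
      rw [h2]
      calc Real.exp (x ρ) * (Real.exp (-(x ρ)) / (K * ρ))
          = (Real.exp (x ρ) * Real.exp (-(x ρ))) / (K * ρ) := by ring
        _ = 1 / (ρ * K) := by rw [hprod, mul_comm K ρ]
    show h (x ρ) = _
    have hval : h (x ρ) = Real.log (x ρ) + γ + Real.exp (x ρ) * E1fun (x ρ) := by
      simp only [hh]; ring
    rw [hval, hE1]
  -- conclude
  have hfin := (Real.continuous_exp.tendsto 0).comp hL
  rw [Real.exp_zero] at hfin
  refine hfin.congr' ?_
  filter_upwards [self_mem_nhdsWithin] with ρ hρ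
  obtain ⟨hy, -⟩ := hx ρ hρ
  show Real.exp (Real.log (x ρ) + γ + 1 / (ρ * K)) = _
  rw [Real.exp_add, Real.exp_add, Real.exp_log hy]
end
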